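/- Let t ≥ 1. If λ is a partition whose Frobenius partition satisfies a_i + b_j + 1 ≢ 0 (mod t) for all i,j but there exists an index i with a_i ≥ t such that a_i − t does not appear among the a's, then λ has a box of hook length exactly t (and hence λ is not a t-core). -/
import Mathlib


open Filter

/-- A partition represented as a weakly decreasing, eventually zero sequence of parts
(0-indexed: `f i` is the (i+1)-st part). -/
def IsPartition (f : ℕ → ℕ) : Prop :=
  Antitone f ∧ ∀ᶠ i in atTop, f i = 0

/-- The size `|λ|` of a partition. -/
noncomputable def psize (f : ℕ → ℕ) : ℕ := ∑' i, f i

/-- The conjugate partition: `conj f j` is the number of parts of `f` exceeding `j`,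
i.e. the (j+1)-st column length. -/
noncomputable def conj (f : ℕ → ℕ) : ℕ → ℕ := fun j => Nat.card {i : ℕ // j < f i}

/-- The Durfee square size: the number of indices `i` with `λ_{i+1} ≥ i+1`. -/
noncomputable def durfee (f : ℕ → ℕ) : ℕ := Nat.card {i : ℕ // i < f i}

/-- Top Frobenius entry `a_{i+1} = λ_{i+1} - (i+1)` (0-indexed). -/
noncomputable def frobA (f : ℕ → ℕ) (i : ℕ) : ℕ := f i - (i + 1)

/-- Bottom Frobenius entry `b_{i+1} = λ'_{i+1} - (i+1)` (0-indexed). -/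
noncomputable def frobB (f : ℕ → ℕ) (i : ℕ) : ℕ := conj f i - (i + 1)

/-- Hook length of the (0-indexed) box `(i,j)` (valid when `j < f i`):
`h = (λ_i - j) + (λ'_j - i) - 1` in 1-indexed terms, which equals
`(λ_i - i) + (λ'_j - j) + 1`. -/
noncomputable def hook (f : ℕ → ℕ) (i j : ℕ) : ℕ :=
  (f i - (j + 1)) + (conj f j - (i + 1)) + 1

/-- A `t`-core partition: no hook length divisible by `t`. -/
def IsTCore (t : ℕ) (f : ℕ → ℕ) : Prop :=
  IsPartition f ∧ ∀ i j, j < f i → ¬ t ∣ hook f i j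

lemma conj_eq_of (f : ℕ → ℕ) (hf : Antitone f) {j k : ℕ} (h1 : j < f k) (h2 : f (k+1) ≤ j) :
    conj f j = k + 1 := by
  have hset : {m : ℕ | j < f m} = ↑(Finset.range (k+1)) := by
    ext m
    simp only [Set.mem_setOf_eq, Finset.coe_range, Set.mem_Iio]
    constructor
    · intro hm
      by_contra hc
      push_neg at hc
      have := hf (show k+1 ≤ m by omega)
      omega
    · intro hm
      have := hf (show m ≤ k by omega)
      omega
  have h3 : conj f j = Set.ncard {m : ℕ | j < f m} := Nat.card_coe_set_eq _
  rw [h3, hset, Set.ncard_coe_finset, Finset.card_range]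

lemma lt_durfee_of (f : ℕ → ℕ) (hf : Antitone f) (hz : ∀ᶠ i in atTop, f i = 0)
    {k : ℕ} (hk : k < f k) : k < durfee f := by
  obtain ⟨N, hN⟩ := eventually_atTop.mp hz
  have hfin : {m : ℕ | m < f m}.Finite := by
    apply Set.Finite.subset (Finset.range N).finite_toSet
    intro m hm
    simp only [Set.mem_setOf_eq] at hm
    simp only [Finset.coe_range, Set.mem_Iio]
    by_contra hc
    push_neg at hc
    rw [hN m hc] at hm
    omega
  have hsub : ↑(Finset.range (k+1)) ⊆ {m : ℕ | m < f m} := by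
    intro m hm
    simp only [Finset.coe_range, Set.mem_Iio] at hm
    have := hf (show m ≤ k by omega)
    simp only [Set.mem_setOf_eq]
    omega
  have hle := Set.ncard_le_ncard hsub hfin
  rw [Set.ncard_coe_finset, Finset.card_range] at hle
  have hd : durfee f = Set.ncard {m : ℕ | m < f m} := Nat.card_coe_set_eq _
  omega

/-- If no `a_i + b_j + 1` is divisible by `t` but some `a_i ≥ t` has `a_i - t`
missing from the top row, then `λ` has a box of hook length exactly `t`
(hence `λ` is not a `t`-core). -/
theorem stmt5 (t : ℕ) (ht : 1 ≤ t) (f : ℕ → ℕ) (hf : IsPartition f)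
    (hmod : ∀ i j, i < durfee f → j < durfee f → ¬ t ∣ (frobA f i + frobB f j + 1))
    (hmiss : ∃ i, i < durfee f ∧ t ≤ frobA f i ∧
      ∀ k, k < durfee f → frobA f k ≠ frobA f i - t) :
    (∃ i j, j < f i ∧ hook f i j = t) ∧ ¬ IsTCore t f := by
  obtain ⟨hanti, hz⟩ := hf
  obtain ⟨i, hid, hti, hm⟩ := hmiss
  have ha : frobA f i = f i - (i+1) := rfl
  set a := frobA f i with ha'
  have hfi : f i = i + 1 + a := by omega
  set c : ℕ := a + 1 - t with hc
  have hc1 : 1 ≤ c := by omega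
  -- key: find the box
  suffices h : ∃ j, j < f i ∧ hook f i j = t by
    obtain ⟨j, hj1, hj2⟩ := h
    refine ⟨⟨i, j, hj1, hj2⟩, ?_⟩
    rintro ⟨-, h2⟩
    exact h2 i j hj1 (hj2 ▸ dvd_refl t)
  have hex : ∃ n, (f n : ℤ) - n < (c : ℤ) := by
    obtain ⟨N, hN⟩ := eventually_atTop.mp hz
    refine ⟨N, ?_⟩
    rw [hN N le_rfl]
    push_cast
    omega
  have hK1 : i < Nat.find hex := by
    rw [Nat.lt_find_iff]
    intro m hmi
    have hfm := hanti hmi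
    push_neg
    have : f i ≤ f m := hfm
    push_cast
    omega
  set k := Nat.find hex - 1 with hk
  have hkK : k + 1 = Nat.find hex := by omega
  have hψk := Nat.find_min hex (show k < Nat.find hex by omega)
  have hψk1 : (f (k+1) : ℤ) - ((k+1 : ℕ) : ℤ) < (c : ℤ) := by
    rw [hkK]; exact Nat.find_spec hex
  have hik : i ≤ k := by omega
  have hk1 : k + c ≤ f k := by push_neg at hψk; omega
  have hk2 : f (k+1) ≤ k + c := by omega
  by_cases hcase : f k = k + c
  · -- impossible: frobA f k = a - t contradicts hmiss
    exfalso
    have hkd : k < durfee f := lt_durfee_of f hanti hz (by omega)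
    have hfr : frobA f k = f k - (k+1) := rfl
    have := hm k hkd
    omega
  · -- f k ≥ k + c + 1 : the box is (i, k + c)
    have hk3 : k + c + 1 ≤ f k := by omega
    have hfk_le : f k ≤ f i := hanti hik
    have hkit : k < i + t := by omega
    refine ⟨k + c, by omega, ?_⟩
    have hconj : conj f (k + c) = k + 1 := conj_eq_of f hanti (by omega) hk2
    show (f i - (k + c + 1)) + (conj f (k + c) - (i + 1)) + 1 = t
    rw [hconj]
    omega
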